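/- (Demidovich criterion.) Let F : ℝⁿ × ℝ → ℝⁿ be continuously differentiable in its first (state) variable and continuous in its second (time) variable. Suppose there exist a real symmetric positive definite n×n matrix P and β > 0 such that for all x ∈ ℝⁿ, t ∈ ℝ, and v ∈ ℝⁿ, vᵀ(P · DₓF(x,t) + DₓF(x,t)ᵀ · P) v ≤ −β ‖v‖² (uniform negative definiteness of (1/2)(P J + JᵀP)). Then there exist constants K > 0 and α > 0, independent of the solutions, such that for any two differentiable functions x, x* : [t₀,∞) → ℝⁿ with x'(t) = F(x(t),t) and x*'(t) = F(x*(t),t) for all t ≥ t₀, one has ‖x(t) − x*(t)‖ ≤ K e^{−α(t−t₀)} ‖x(t₀) − x*(t₀)‖ for all t ≥ t₀ (Euclidean norm). -/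

import Mathlib

open Filter Topology Matrix

/-- The Jacobian matrix of `y ↦ F y t` at `x`. -/
noncomputable def jacobianMatrix {n : ℕ}
    (F : EuclideanSpace ℝ (Fin n) → ℝ → EuclideanSpace ℝ (Fin n))
    (x : EuclideanSpace ℝ (Fin n)) (t : ℝ) : Matrix (Fin n) (Fin n) ℝ :=
  Matrix.of fun i j => (fderiv ℝ (fun y => F y t) x) (EuclideanSpace.single j 1) i

section Aux
variable {n : ℕ}
local notation "E" => EuclideanSpace ℝ (Fin n)

lemma demidovich_clm_coords (L : E →L[ℝ] E) (w : E) (i : Fin n) :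
    L w i = ∑ j, w j * L (EuclideanSpace.single j 1) i := by
  have hw : w = ∑ j, w j • EuclideanSpace.single j (1:ℝ) := by
    ext k
    rw [WithLp.ofLp_sum, Finset.sum_apply]
    simp [EuclideanSpace.single_apply]
  conv_lhs => rw [hw]
  rw [map_sum, WithLp.ofLp_sum, Finset.sum_apply]
  simp

lemma demidovich_jac_mulVec (F : E → ℝ → E) (x : E) (t : ℝ) (w : E) (i : Fin n) :
    (fderiv ℝ (fun y => F y t) x) w i = (jacobianMatrix F x t *ᵥ fun j => w j) i := by
  rw [demidovich_clm_coords, Matrix.mulVec]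
  simp [jacobianMatrix, dotProduct, mul_comm]

lemma demidovich_quad_bounds (hn : 1 ≤ n) (P : Matrix (Fin n) (Fin n) ℝ) (hP : P.PosDef) :
    ∃ m > (0:ℝ), ∃ M > (0:ℝ), ∀ w : E,
      m * ‖w‖^2 ≤ (fun j => w j) ⬝ᵥ (P *ᵥ fun j => w j) ∧
      (fun j => w j) ⬝ᵥ (P *ᵥ fun j => w j) ≤ M * ‖w‖^2 := by
  have hnt : Nontrivial E := by
    refine nontrivial_of_ne (EuclideanSpace.single ⟨0, hn⟩ (1:ℝ)) 0 ?_
    intro h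
    have := congrFun (congrArg (fun (v : E) => (v : Fin n → ℝ)) h) ⟨0, hn⟩
    simp [EuclideanSpace.single_apply] at this
  set q : E → ℝ := fun w => (fun j => w j) ⬝ᵥ (P *ᵥ fun j => w j) with hq
  have hqc : Continuous q := by
    have : q = fun w => ∑ i, (w i) * ∑ j, P i j * w j := by
      funext w; simp [q, dotProduct, Matrix.mulVec]
    rw [this]; fun_prop
  have hsph : IsCompact (Metric.sphere (0:E) 1) := isCompact_sphere 0 1
  have hne : (Metric.sphere (0:E) 1).Nonempty :=
    NormedSpace.sphere_nonempty.mpr zero_le_one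
  obtain ⟨v₀, hv₀, hmin⟩ := hsph.exists_isMinOn hne hqc.continuousOn
  obtain ⟨v₁, hv₁, hmax⟩ := hsph.exists_isMaxOn hne hqc.continuousOn
  have hq0 : ∀ v : E, v ≠ 0 → 0 < q v := by
    intro v hv
    have := hP.re_dotProduct_pos (x := fun j => v j) (by
      intro h
      apply hv
      ext j
      exact congrFun h j)
    simpa [q] using this
  have hm : 0 < q v₀ := hq0 v₀ (by
    intro h; rw [h] at hv₀; simp at hv₀)
  have hhom : ∀ (c : ℝ) (w : E), q (c • w) = c^2 * q w := by
    intro c w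
    simp only [q]
    have : (fun j => (c • w) j) = c • (fun j => w j) := by
      funext j; simp
    rw [this, Matrix.mulVec_smul, smul_dotProduct, dotProduct_smul]
    ring_nf
  refine ⟨q v₀, hm, max (q v₁) 1, lt_of_lt_of_le one_pos (le_max_right _ _), fun w => ?_⟩
  rcases eq_or_ne w 0 with rfl | hw
  · simp [q]
  · have hnw : ‖w‖ ≠ 0 := norm_ne_zero_iff.mpr hw
    have hpos : (0:ℝ) < ‖w‖ := norm_pos_iff.mpr hw
    set u : E := ‖w‖⁻¹ • w with hu
    have hus : u ∈ Metric.sphere (0:E) 1 := by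
      simp [hu, norm_smul, abs_of_nonneg (inv_nonneg.mpr hpos.le), inv_mul_cancel₀ hnw]
    have hwu : w = ‖w‖ • u := by
      rw [hu, smul_smul, mul_inv_cancel₀ hnw, one_smul]
    have hqw : q w = ‖w‖^2 * q u := by rw [hwu, hhom]; rw [← hwu]
    constructor
    · show q v₀ * ‖w‖^2 ≤ q w
      rw [hqw]
      have h0 : q v₀ ≤ q u := isMinOn_iff.mp hmin u hus
      nlinarith [sq_nonneg ‖w‖]
    · show q w ≤ _ * ‖w‖^2
      rw [hqw]
      have h1 : q u ≤ max (q v₁) 1 := le_trans (isMaxOn_iff.mp hmax u hus) (le_max_left _ _)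
      nlinarith [sq_nonneg ‖w‖]

lemma demidovich_key_ineq (F : E → ℝ → E) (hF : ∀ t : ℝ, ContDiff ℝ 1 (fun y => F y t))
    (P : Matrix (Fin n) (Fin n) ℝ) (hPsym : P.IsSymm) (β : ℝ)
    (hJ : ∀ (x : E) (t : ℝ) (v : Fin n → ℝ),
      v ⬝ᵥ ((P * jacobianMatrix F x t + (jacobianMatrix F x t)ᵀ * P) *ᵥ v) ≤
        -β * ‖(EuclideanSpace.equiv (Fin n) ℝ).symm v‖ ^ 2)
    (a b : E) (t : ℝ) :
    (fun j => (a - b) j) ⬝ᵥ (P *ᵥ fun j => (F a t - F b t) j) ≤ -(β/2) * ‖a - b‖^2 := by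
  set e : E := a - b with he
  set v : Fin n → ℝ := fun j => e j with hv
  set d : Fin n → ℝ := v ᵥ* P with hd
  set d' : E := (EuclideanSpace.equiv (Fin n) ℝ).symm d with hd'
  have hd'c : ∀ j, d' j = d j := fun j => rfl
  set ψ : ℝ → E := fun s => F (b + s • e) t with hψdef
  have hψ : ∀ s : ℝ, HasDerivAt ψ ((fderiv ℝ (fun y => F y t) (b + s • e)) e) s := by
    intro s
    have hγ : HasDerivAt (fun s : ℝ => b + s • e) e s := by
      simpa using ((hasDerivAt_id s).smul_const e).const_add b
    exact (((hF t).differentiable one_ne_zero (b + s • e)).hasFDerivAt).comp_hasDerivAt s hγ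
  set g : ℝ → ℝ := fun s => inner ℝ d' ((fderiv ℝ (fun y => F y t) (b + s • e)) e) with hg
  have hφ : ∀ s : ℝ, HasDerivAt (fun s => (inner ℝ d' (ψ s) : ℝ)) (g s) s := by
    intro s
    have := (HasDerivAt.inner ℝ (hasDerivAt_const s d') (hψ s))
    simpa using this
  have hgcont : Continuous g := by
    have h1 : Continuous fun s : ℝ => fderiv ℝ (fun y => F y t) (b + s • e) :=
      ((hF t).continuous_fderiv one_ne_zero).comp (by fun_prop)
    exact (continuous_const.inner (h1.clm_apply continuous_const))
  have hinner : ∀ w : E, (inner ℝ d' w : ℝ) = d ⬝ᵥ (fun j => w j) := by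
    intro w
    rw [PiLp.inner_apply]
    simp [dotProduct, hd'c, RCLike.inner_apply]
    exact Finset.sum_congr rfl (fun _ _ => mul_comm _ _)
  have hgle : ∀ s : ℝ, g s ≤ -(β/2) * ‖e‖^2 := by
    intro s
    set J := jacobianMatrix F (b + s • e) t with hJ'
    have h1 : g s = d ⬝ᵥ (J *ᵥ v) := by
      have hgs : g s = inner ℝ d' ((fderiv ℝ (fun y => F y t) (b + s • e)) e) := rfl
      rw [hgs, hinner]
      congr 1
      funext j
      exact demidovich_jac_mulVec F _ t e j
    have h2 := hJ (b + s • e) t v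
    have h3 : ‖(EuclideanSpace.equiv (Fin n) ℝ).symm v‖ = ‖e‖ := by
      have : (EuclideanSpace.equiv (Fin n) ℝ).symm v = e := rfl
      rw [this]
    have h4 : v ⬝ᵥ ((P * J + Jᵀ * P) *ᵥ v) = 2 * (d ⬝ᵥ (J *ᵥ v)) := by
      rw [Matrix.add_mulVec, dotProduct_add, ← Matrix.mulVec_mulVec,
        ← Matrix.mulVec_mulVec, Matrix.dotProduct_mulVec v P,
        Matrix.dotProduct_mulVec v Jᵀ, Matrix.vecMul_transpose]
      have h5 : (J *ᵥ v) ⬝ᵥ (P *ᵥ v) = d ⬝ᵥ (J *ᵥ v) := by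
        rw [dotProduct_comm, hd]
        congr 1
        conv_rhs => rw [← hPsym.eq]
        rw [Matrix.vecMul_transpose]
      rw [h5, hd]
      ring
    rw [h1]
    rw [h4, h3] at h2
    linarith
  have hint : (inner ℝ d' (ψ 1) : ℝ) - inner ℝ d' (ψ 0) = ∫ s in (0:ℝ)..1, g s := by
    rw [intervalIntegral.integral_eq_sub_of_hasDerivAt (fun s _ => hφ s)
      (hgcont.intervalIntegrable 0 1)]
  have hle : (∫ s in (0:ℝ)..1, g s) ≤ -(β/2) * ‖e‖^2 := by
    calc (∫ s in (0:ℝ)..1, g s) ≤ ∫ _s in (0:ℝ)..1, -(β/2) * ‖e‖^2 := by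
          apply intervalIntegral.integral_mono_on zero_le_one
            (hgcont.intervalIntegrable 0 1)
            (intervalIntegrable_const : IntervalIntegrable (fun _ => -(β/2) * ‖e‖^2) MeasureTheory.volume 0 1)
            (fun s _ => hgle s)
      _ = -(β/2) * ‖e‖^2 := by simp
  have hψ1 : ψ 1 = F a t := by rw [hψdef]; simp [he]
  have hψ0 : ψ 0 = F b t := by rw [hψdef]; simp
  have hfinal : (fun j => e j) ⬝ᵥ (P *ᵥ fun j => (F a t - F b t) j) =
      (inner ℝ d' (ψ 1) : ℝ) - inner ℝ d' (ψ 0) := by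
    rw [hψ1, hψ0, hinner, hinner, Matrix.dotProduct_mulVec, ← hd]
    rw [← dotProduct_sub]
    rfl
  rw [hfinal, hint]
  exact hle

end Aux

/-- Demidovich criterion. If for some symmetric positive
definite `P` and `β > 0` the matrix `P·DₓF + DₓFᵀ·P` satisfies
`vᵀ(P J + Jᵀ P)v ≤ -β‖v‖²` uniformly in `(x,t)`, then there are `K, α > 0` such
that any two solutions of `ẋ = F(x,t)` satisfy
`‖x(t) - x*(t)‖ ≤ K e^{-α(t-t₀)} ‖x(t₀) - x*(t₀)‖` in the Euclidean norm. -/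
theorem demidovich_criterion {n : ℕ} (hn : 1 ≤ n)
    (F : EuclideanSpace ℝ (Fin n) → ℝ → EuclideanSpace ℝ (Fin n))
    (hF : ∀ t : ℝ, ContDiff ℝ 1 (fun y => F y t))
    (hFt : ∀ y, Continuous (fun t => F y t))
    (P : Matrix (Fin n) (Fin n) ℝ) (hP : P.PosDef) (hPsym : P.IsSymm)
    (β : ℝ) (hβ : 0 < β)
    (hJ : ∀ (x : EuclideanSpace ℝ (Fin n)) (t : ℝ) (v : Fin n → ℝ),
      v ⬝ᵥ ((P * jacobianMatrix F x t + (jacobianMatrix F x t)ᵀ * P) *ᵥ v) ≤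
        -β * ‖(EuclideanSpace.equiv (Fin n) ℝ).symm v‖ ^ 2) :
    ∃ K > 0, ∃ α > 0, ∀ (t₀ : ℝ) (x xs : ℝ → EuclideanSpace ℝ (Fin n)),
      (∀ t, t₀ ≤ t → HasDerivAt x (F (x t) t) t) →
      (∀ t, t₀ ≤ t → HasDerivAt xs (F (xs t) t) t) →
      ∀ t, t₀ ≤ t →
        ‖x t - xs t‖ ≤ K * Real.exp (-α * (t - t₀)) * ‖x t₀ - xs t₀‖ := by
  obtain ⟨m, hm, M, hM, hbounds⟩ := demidovich_quad_bounds hn P hP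
  set c : ℝ := β / M with hc
  have hcpos : 0 < c := div_pos hβ hM
  refine ⟨Real.sqrt (M / m), Real.sqrt_pos.mpr (div_pos hM hm), c / 2, by positivity,
    fun t₀ x xs hx hxs t ht => ?_⟩
  set e : ℝ → EuclideanSpace ℝ (Fin n) := fun τ => x τ - xs τ with he
  set e' : ℝ → EuclideanSpace ℝ (Fin n) := fun τ => F (x τ) τ - F (xs τ) τ with he'
  have hde : ∀ τ, t₀ ≤ τ → HasDerivAt e (e' τ) τ := fun τ hτ => (hx τ hτ).sub (hxs τ hτ)
  set Tp : EuclideanSpace ℝ (Fin n) →L[ℝ] EuclideanSpace ℝ (Fin n) :=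
    LinearMap.toContinuousLinearMap (Matrix.toEuclideanLin P) with hTpdef
  have hTpc : ∀ (w : EuclideanSpace ℝ (Fin n)) (i : Fin n),
      Tp w i = (P *ᵥ fun j => w j) i := fun w i => rfl
  have hTpinner : ∀ w z : EuclideanSpace ℝ (Fin n),
      (inner ℝ (Tp w) z : ℝ) = (P *ᵥ fun j => w j) ⬝ᵥ (fun j => z j) := by
    intro w z
    rw [PiLp.inner_apply]
    simp [dotProduct, hTpc, RCLike.inner_apply]
    exact Finset.sum_congr rfl (fun _ _ => mul_comm _ _)
  set V : ℝ → ℝ := fun τ => inner ℝ (Tp (e τ)) (e τ) with hV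
  have hVq : ∀ τ, V τ = (fun j => e τ j) ⬝ᵥ (P *ᵥ fun j => e τ j) := by
    intro τ
    show (inner ℝ (Tp (e τ)) (e τ) : ℝ) = _
    rw [hTpinner, dotProduct_comm]
  have hVderiv : ∀ τ, t₀ ≤ τ →
      HasDerivAt V ((inner ℝ (Tp (e τ)) (e' τ) : ℝ) + inner ℝ (Tp (e' τ)) (e τ)) τ := by
    intro τ hτ
    exact HasDerivAt.inner ℝ (Tp.hasFDerivAt.comp_hasDerivAt τ (hde τ hτ)) (hde τ hτ)
  have hsymmdot : ∀ (u w : Fin n → ℝ), (P *ᵥ u) ⬝ᵥ w = u ⬝ᵥ (P *ᵥ w) := by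
    intro u w
    calc (P *ᵥ u) ⬝ᵥ w = w ⬝ᵥ (P *ᵥ u) := dotProduct_comm _ _
      _ = (w ᵥ* P) ⬝ᵥ u := Matrix.dotProduct_mulVec _ _ _
      _ = (P *ᵥ w) ⬝ᵥ u := by
            congr 1
            conv_lhs => rw [← hPsym.eq]
            rw [Matrix.vecMul_transpose]
      _ = u ⬝ᵥ (P *ᵥ w) := dotProduct_comm _ _
  -- derivative bound
  have hDle : ∀ τ, t₀ ≤ τ →
      (inner ℝ (Tp (e τ)) (e' τ) : ℝ) + inner ℝ (Tp (e' τ)) (e τ) ≤ -c * V τ := by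
    intro τ hτ
    have hkey := demidovich_key_ineq F hF P hPsym β hJ (x τ) (xs τ) τ
    have h1 : (inner ℝ (Tp (e' τ)) (e τ) : ℝ) = (fun j => e τ j) ⬝ᵥ (P *ᵥ fun j => e' τ j) := by
      rw [hTpinner, dotProduct_comm]
    have h2 : (inner ℝ (Tp (e τ)) (e' τ) : ℝ) = (fun j => e τ j) ⬝ᵥ (P *ᵥ fun j => e' τ j) := by
      rw [hTpinner, hsymmdot]
    have hkey' : (fun j => e τ j) ⬝ᵥ (P *ᵥ fun j => e' τ j) ≤ -(β/2) * ‖e τ‖^2 := hkey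
    have hVub : V τ ≤ M * ‖e τ‖^2 := by rw [hVq]; exact (hbounds (e τ)).2
    have hVlb : 0 ≤ V τ := by
      rw [hVq]
      have := (hbounds (e τ)).1
      nlinarith [sq_nonneg ‖e τ‖]
    rw [h1, h2]
    have hcM : c * M = β := div_mul_cancel₀ β (ne_of_gt hM)
    nlinarith
  -- Gronwall via monotonicity
  set W : ℝ → ℝ := fun τ => V τ * Real.exp (c * (τ - t₀)) with hW
  have hWderiv : ∀ τ, t₀ ≤ τ → HasDerivAt W
      (((inner ℝ (Tp (e τ)) (e' τ) : ℝ) + inner ℝ (Tp (e' τ)) (e τ) + c * V τ) *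
        Real.exp (c * (τ - t₀))) τ := by
    intro τ hτ
    have h1 : HasDerivAt (fun τ : ℝ => c * (τ - t₀)) c τ := by
      simpa using ((hasDerivAt_id τ).sub_const t₀).const_mul c
    have hexp : HasDerivAt (fun τ => Real.exp (c * (τ - t₀)))
        (c * Real.exp (c * (τ - t₀))) τ := by
      simpa [mul_comm] using h1.exp
    have := (hVderiv τ hτ).fun_mul hexp
    exact this.congr_deriv (by ring)
  have hWanti : AntitoneOn W (Set.Ici t₀) := by
    apply antitoneOn_of_deriv_nonpos (convex_Ici t₀)
    · exact fun τ hτ => ((hWderiv τ hτ).continuousAt).continuousWithinAt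
    · intro τ hτ
      rw [interior_Ici] at hτ
      exact ((hWderiv τ (le_of_lt hτ)).differentiableAt).differentiableWithinAt
    · intro τ hτ
      rw [interior_Ici] at hτ
      rw [(hWderiv τ hτ.le).deriv]
      apply mul_nonpos_of_nonpos_of_nonneg
      · have := hDle τ hτ.le
        linarith
      · positivity
  have hWle : W t ≤ W t₀ := hWanti (Set.mem_Ici.mpr le_rfl) (Set.mem_Ici.mpr ht) ht
  have hWt0 : W t₀ = V t₀ := by simp [hW]
  have hVt : V t ≤ V t₀ * Real.exp (-c * (t - t₀)) := by
    have hexppos : 0 < Real.exp (c * (t - t₀)) := Real.exp_pos _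
    rw [hWt0] at hWle
    have hkey : V t * Real.exp (c * (t - t₀)) ≤ V t₀ := hWle
    have hrw : Real.exp (-c * (t - t₀)) = (Real.exp (c * (t - t₀)))⁻¹ := by
      rw [← Real.exp_neg]; ring_nf
    rw [hrw]
    calc V t = (V t * Real.exp (c * (t - t₀))) * (Real.exp (c * (t - t₀)))⁻¹ := by
          field_simp
      _ ≤ V t₀ * (Real.exp (c * (t - t₀)))⁻¹ :=
          mul_le_mul_of_nonneg_right hkey (by positivity)
  have hlb : m * ‖e t‖^2 ≤ V t := by rw [hVq]; exact (hbounds (e t)).1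
  have hub : V t₀ ≤ M * ‖e t₀‖^2 := by rw [hVq]; exact (hbounds (e t₀)).2
  have hexpnn : (0:ℝ) ≤ Real.exp (-c * (t - t₀)) := (Real.exp_pos _).le
  have hsq : ‖e t‖^2 ≤ (M/m) * Real.exp (-c * (t - t₀)) * ‖e t₀‖^2 := by
    have h1 : m * ‖e t‖^2 ≤ M * ‖e t₀‖^2 * Real.exp (-c * (t - t₀)) :=
      le_trans hlb (le_trans hVt (mul_le_mul_of_nonneg_right hub hexpnn))
    rw [div_mul_eq_mul_div, div_mul_eq_mul_div, le_div_iff₀ hm]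
    nlinarith
  set R : ℝ := Real.sqrt (M/m) * Real.exp (-(c/2) * (t - t₀)) * ‖e t₀‖ with hR
  have hRnn : 0 ≤ R := by positivity
  have hRsq : R^2 = (M/m) * Real.exp (-c * (t - t₀)) * ‖e t₀‖^2 := by
    rw [hR, mul_pow, mul_pow, Real.sq_sqrt (div_pos hM hm).le]
    congr 2
    rw [sq, ← Real.exp_add]
    congr 1
    ring
  have hfin : ‖e t‖ ≤ R := by
    have h2 : ‖e t‖^2 ≤ R^2 := by rw [hRsq]; exact hsq
    have := Real.sqrt_le_sqrt h2
    rwa [Real.sqrt_sq (norm_nonneg _), Real.sqrt_sq hRnn] at this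
  exact hfin
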